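/- Let P ⊆ R^d be a polytope with nonempty interior. Let f(x) = W^(2) ReLU(W^(1) x + b^(1)) + b^(2) and g(x) = V^(2) ReLU(V^(1) x + c^(1)) + c^(2) be one-hidden-layer ReLU networks from R^d to R^m, each with n hidden neurons. Let H_1, ..., H_n be pairwise distinct hyperplanes, each meeting the interior of P, with H_i = {x : <W^(1)_i, x> + b^(1)_i = 0}, and assume that the set of breakpoints of f in int(P) and the set of breakpoints of g in int(P) both equal (H_1 ∪ ... ∪ H_n) ∩ int(P). If there exist A in R^{m x d} and c in R^m with f(x) - g(x) = A x + c for all x in P, then there exists alpha in {-1, 0, 1}^n such that A = sum_{i=1}^n alpha_i * W^(2)_{:,i} W^(1)_i. -/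

import Mathlib

namespace ReLUNet

open scoped BigOperators symmDiff
open scoped Topology

/-- The standard inner product `⟨w, x⟩ = ∑ j, w j * x j` on `ℝ^d`. -/
def sInner {d : ℕ} (w x : Fin d → ℝ) : ℝ := ∑ j, w j * x j

/-- The Euclidean norm on `ℝ^d`. -/
noncomputable def euclNorm {d : ℕ} (w : Fin d → ℝ) : ℝ := Real.sqrt (∑ j, (w j) ^ 2)

/-- The (affine) hyperplane `{x : ⟨w, x⟩ + β = 0}`. -/
def Hyp {d : ℕ} (w : Fin d → ℝ) (β : ℝ) : Set (Fin d → ℝ) := {x | sInner w x + β = 0}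

/-- A polytope is the convex hull of a finite set. -/
def IsPolytope {d : ℕ} (P : Set (Fin d → ℝ)) : Prop :=
  ∃ s : Finset (Fin d → ℝ), P = convexHull ℝ (↑s : Set (Fin d → ℝ))

/-- The hyperplane `{⟨w,·⟩ + β = 0}` is *inside* `P` if it meets the relative
interior of `P` and `P` is not contained in it. -/
def HypInside {d : ℕ} (w : Fin d → ℝ) (β : ℝ) (P : Set (Fin d → ℝ)) : Prop :=
  (Hyp w β ∩ intrinsicInterior ℝ P).Nonempty ∧ ¬ P ⊆ Hyp w β

/-- The ReLU layer `x ↦ ReLU (W x + b)`. -/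
noncomputable def reluLayer {d n : ℕ} (W : Fin n → Fin d → ℝ) (b : Fin n → ℝ)
    (x : Fin d → ℝ) : Fin n → ℝ :=
  fun i => max (sInner (W i) x + b i) 0

/-- The activation pattern `S_i = {1, …, i} Δ {n}` (in `0`-based indexing:
`{j : j < i} Δ {j : j = n - 1}`). -/
def slabSet (n i : ℕ) : Set (Fin n) :=
  {j : Fin n | (j : ℕ) < i} ∆ {j : Fin n | (j : ℕ) = n - 1}

/-- A slab layer on a polytope `P`: rows nonzero, each hyperplane inside `P`,
and no two hyperplanes meet inside `P`. -/
def IsSlabLayer {d n : ℕ} (W : Fin n → Fin d → ℝ) (b : Fin n → ℝ)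
    (P : Set (Fin d → ℝ)) : Prop :=
  (∀ i, W i ≠ 0) ∧ (∀ i, HypInside (W i) (b i) P) ∧
    ∀ i j, i ≠ j → Hyp (W i) (b i) ∩ Hyp (W j) (b j) ∩ P = ∅

/-- An oriented slab layer: on `P`, the strict activation patterns are exactly
the sets `slabSet n i` for `i = 0, …, n`, and all of them occur. -/
def IsOriented {d n : ℕ} (W : Fin n → Fin d → ℝ) (b : Fin n → ℝ)
    (P : Set (Fin d → ℝ)) : Prop :=
  (∀ x ∈ P, (∀ j, sInner (W j) x + b j ≠ 0) →
      ∃ i ≤ n, {j | 0 < sInner (W j) x + b j} = slabSet n i) ∧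
    (∀ i ≤ n, ∃ x ∈ P, (∀ j, sInner (W j) x + b j ≠ 0) ∧
      {j | 0 < sInner (W j) x + b j} = slabSet n i)

/-- A ReLU layer is transparent on `X` if at every point of `X` some neuron has
nonnegative preactivation. -/
def Transparent {d n : ℕ} (W : Fin n → Fin d → ℝ) (b : Fin n → ℝ)
    (X : Set (Fin d → ℝ)) : Prop :=
  ∀ x ∈ X, ∃ i, 0 ≤ sInner (W i) x + b i

/-- The `ℓ^∞` norm of the pair `(w, β)`. -/
noncomputable def infNormPair {d : ℕ} (w : Fin d → ℝ) (β : ℝ) : ℝ :=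
  max (⨆ j, |w j|) |β|

/-- `(w', β')` is `ε`-close to `(w, β)` after normalizing by the Euclidean norms
of `w'` and `w`, up to a global sign. -/
noncomputable def EpsClose {d : ℕ} (w' : Fin d → ℝ) (β' : ℝ)
    (w : Fin d → ℝ) (β : ℝ) (ε : ℝ) : Prop :=
  min
    (infNormPair (fun j => w' j / euclNorm w' - w j / euclNorm w)
      (β' / euclNorm w' - β / euclNorm w))
    (infNormPair (fun j => w' j / euclNorm w' + w j / euclNorm w)
      (β' / euclNorm w' + β / euclNorm w)) < ε

/-- A one-hidden-layer ReLU network `x ↦ W₂ ReLU (W₁ x + b₁) + b₂`. -/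
noncomputable def oneLayer {d n m : ℕ} (W1 : Fin n → Fin d → ℝ) (b1 : Fin n → ℝ)
    (W2 : Fin m → Fin n → ℝ) (b2 : Fin m → ℝ) (x : Fin d → ℝ) : Fin m → ℝ :=
  fun p => (∑ i, W2 p i * max (sInner (W1 i) x + b1 i) 0) + b2 p

/-- The set of breakpoints of `f`: points near which `f` is not affine. -/
def Breakpoints {d m : ℕ} (f : (Fin d → ℝ) → Fin m → ℝ) : Set (Fin d → ℝ) :=
  {x | ¬ ∃ U : Set (Fin d → ℝ), IsOpen U ∧ x ∈ U ∧
      ∃ (A : Fin m → Fin d → ℝ) (c : Fin m → ℝ),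
        ∀ y ∈ U, ∀ p, f y p = (∑ j, A p j * y j) + c p}


lemma sInner_add_right {d : ℕ} (w x y : Fin d → ℝ) :
    sInner w (x + y) = sInner w x + sInner w y := by
  simp [sInner, mul_add, Finset.sum_add_distrib]

lemma sInner_smul_right {d : ℕ} (w x : Fin d → ℝ) (t : ℝ) :
    sInner w (t • x) = t * sInner w x := by
  simp [sInner, Finset.mul_sum]; exact Finset.sum_congr rfl fun j _ => by ring

lemma sInner_sub_left {d : ℕ} (w w' x : Fin d → ℝ) :
    sInner (w - w') x = sInner w x - sInner w' x := by
  simp [sInner, sub_mul, Finset.sum_sub_distrib]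

lemma sInner_smul_left {d : ℕ} (w x : Fin d → ℝ) (t : ℝ) :
    sInner (t • w) x = t * sInner w x := by
  simp [sInner, Finset.mul_sum]; exact Finset.sum_congr rfl fun j _ => by ring

lemma sInner_self_pos {d : ℕ} {w : Fin d → ℝ} (hw : w ≠ 0) : 0 < sInner w w := by
  obtain ⟨j, hj⟩ : ∃ j, w j ≠ 0 := by
    by_contra h; push_neg at h; exact hw (funext h)
  have h1 : ∑ i, (w i)^2 = sInner w w := Finset.sum_congr rfl fun i _ => by ring
  rw [← h1]
  apply Finset.sum_pos' (fun i _ => sq_nonneg _)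
  exact ⟨j, Finset.mem_univ j, by positivity⟩

lemma sInner_self_eq_zero {d : ℕ} {w : Fin d → ℝ} (h : sInner w w = 0) : w = 0 := by
  have h' : ∑ j, (w j)^2 = 0 := by
    rw [← h]; exact Finset.sum_congr rfl fun j _ => (sq (w j)).symm ▸ by ring
  funext j
  have := (Finset.sum_eq_zero_iff_of_nonneg (fun i _ => sq_nonneg (w i))).mp h' j (Finset.mem_univ j)
  exact pow_eq_zero_iff (by norm_num) |>.mp this

lemma continuous_sInner {d : ℕ} (w : Fin d → ℝ) : Continuous fun x => sInner w x := by
  unfold sInner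
  exact continuous_finset_sum _ fun j _ => (continuous_const.mul (continuous_apply j))

lemma sInner_sub_right {d : ℕ} (w x y : Fin d → ℝ) :
    sInner w (x - y) = sInner w x - sInner w y := by
  simp [sInner, mul_sub, Finset.sum_sub_distrib]

lemma parallel_of_subset {d : ℕ} {w w' : Fin d → ℝ} {β β' : ℝ} (hw : w ≠ 0)
    (h : ∀ x, sInner w x + β = 0 → sInner w' x + β' = 0) :
    ∃ lam : ℝ, w' = lam • w ∧ β' = lam * β := by
  have hww : (0:ℝ) < sInner w w := sInner_self_pos hw
  set x0 : Fin d → ℝ := (-β / sInner w w) • w with hx0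
  have hx0H : sInner w x0 + β = 0 := by
    rw [hx0, sInner_smul_right]; field_simp; ring
  have hkey : ∀ v, sInner w v = 0 → sInner w' v = 0 := by
    intro v hv
    have h1 := h x0 hx0H
    have h2 := h (x0 + v) (by rw [sInner_add_right, hv, add_zero]; exact hx0H)
    rw [sInner_add_right] at h2; linarith
  set lam := sInner w w' / sInner w w with hlam
  set v := w' - lam • w with hv
  have hwv : sInner w v = 0 := by
    have hsym : sInner w w' = sInner w' w := by
      unfold sInner; exact Finset.sum_congr rfl fun j _ => by ring
    rw [hv, sInner_sub_right, sInner_smul_right, hlam, hsym]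
    field_simp; ring
  have hw'v : sInner w' v = 0 := hkey v hwv
  have hvv : sInner v v = 0 := by
    conv_lhs => rw [hv]
    rw [sInner_sub_left, sInner_smul_left, hw'v, hwv]
    ring
  have hv0 : v = 0 := sInner_self_eq_zero hvv
  have hw'eq : w' = lam • w := by rwa [hv, sub_eq_zero] at hv0
  refine ⟨lam, hw'eq, ?_⟩
  have := h x0 hx0H
  rw [hw'eq, sInner_smul_left] at this
  have hwx0 : sInner w x0 = -β := by linarith [hx0H]
  rw [hwx0] at this; linarith

lemma hyp_scale {d : ℕ} (w : Fin d → ℝ) (β : ℝ) {lam : ℝ} (hlam : lam ≠ 0) :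
    Hyp (lam • w) (lam * β) = Hyp w β := by
  ext x
  simp only [Hyp, Set.mem_setOf_eq, sInner_smul_left]
  constructor
  · intro h
    have h2 : lam * (sInner w x + β) = 0 := by linarith [h, mul_add lam (sInner w x) β]
    rcases mul_eq_zero.mp h2 with h' | h'
    · exact absurd h' hlam
    · exact h'
  · intro h
    have h2 : lam * (sInner w x + β) = 0 := by rw [h, mul_zero]
    linarith [mul_add lam (sInner w x) β]

lemma avoid {d : ℕ} {ι : Type*} [DecidableEq ι] (w : Fin d → ℝ) (β : ℝ)
    (L : ι → (Fin d → ℝ)) (r : ι → ℝ) (t : Finset ι)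
    (hk : ∀ k ∈ t, ∃ z, (sInner w z + β = 0) ∧ sInner (L k) z + r k ≠ 0)
    (x0 : Fin d → ℝ) (hx0 : sInner w x0 + β = 0) (ρ : ℝ) (hρ : 0 < ρ) :
    ∃ y, (sInner w y + β = 0) ∧ dist y x0 < ρ ∧ ∀ k ∈ t, sInner (L k) y + r k ≠ 0 := by
  classical
  induction t using Finset.induction_on with
  | empty => exact ⟨x0, hx0, by simpa using hρ, by simp⟩
  | insert _ _ knot ih =>
    rename_i k t
    obtain ⟨y, hyH, hyd, hyt⟩ := ih (fun j hj => hk j (Finset.mem_insert_of_mem hj))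
    by_cases hky : sInner (L k) y + r k ≠ 0
    · refine ⟨y, hyH, hyd, ?_⟩
      intro j hj
      rcases Finset.mem_insert.mp hj with rfl | hj'
      · exact hky
      · exact hyt j hj'
    · push_neg at hky
      obtain ⟨z, hzH, hzk⟩ := hk k (Finset.mem_insert_self k t)
      set cpt : ℝ → (Fin d → ℝ) := fun s => y + s • (z - y) with hcpt
      have haff : ∀ (u : Fin d → ℝ) (γ : ℝ) (s : ℝ),
          sInner u (cpt s) + γ = (sInner u y + γ) + s * sInner u (z - y) := by
        intro u γ s
        rw [hcpt]; simp only []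
        rw [sInner_add_right, sInner_smul_right]; ring
      have hccont : Continuous cpt := by
        rw [hcpt]; exact continuous_const.add (continuous_id.smul continuous_const)
      -- eventually conditions on 𝓝[>] 0
      have hmemF : ∀ᶠ s in 𝓝[>] (0:ℝ), 0 < s := eventually_mem_nhdsWithin
      have hdistF : ∀ᶠ s in 𝓝[>] (0:ℝ), dist (cpt s) x0 < ρ := by
        have h1 : Filter.Tendsto (fun s => dist (cpt s) x0) (𝓝[>] 0) (𝓝 (dist (cpt 0) x0)) := by
          exact ((hccont.dist continuous_const).continuousAt).tendsto.mono_left nhdsWithin_le_nhds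
        have h0 : dist (cpt 0) x0 < ρ := by
          rw [hcpt]; simpa using hyd
        exact h1.eventually_lt_const h0
      have htF : ∀ᶠ s in 𝓝[>] (0:ℝ), ∀ j ∈ t, sInner (L j) (cpt s) + r j ≠ 0 := by
        rw [Filter.eventually_all_finset]
        intro j hj
        have h1 : Filter.Tendsto (fun s => sInner (L j) (cpt s) + r j) (𝓝[>] 0)
            (𝓝 (sInner (L j) (cpt 0) + r j)) := by
          exact (((continuous_sInner (L j)).comp hccont).add continuous_const).continuousAt.tendsto.mono_left nhdsWithin_le_nhds
        have h0 : sInner (L j) (cpt 0) + r j ≠ 0 := by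
          rw [hcpt]; simpa using hyt j hj
        exact h1.eventually_ne h0
      obtain ⟨s, hs1, hs2, hs3⟩ := (hmemF.and (hdistF.and htF)).exists
      refine ⟨cpt s, ?_, hs2, ?_⟩
      · rw [haff w β s]
        have h1 : sInner w y + β = 0 := hyH
        have h2 : sInner w (z - y) = 0 := by
          rw [sInner_sub_right]
          have : sInner w z + β = 0 := hzH
          linarith
        rw [h1, h2]; ring
      · intro j hj
        rcases Finset.mem_insert.mp hj with rfl | hj'
        · rw [haff (L j) (r j) s, hky]
          have h2 : sInner (L j) (z - y) ≠ 0 := by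
            rw [sInner_sub_right]
            have hy' : sInner (L j) y = - r j := by linarith
            rw [hy']
            intro hcon
            apply hzk
            linarith
          simpa using mul_ne_zero (ne_of_gt hs1) h2
        · exact hs3 j hj'

lemma expand {d n m : ℕ} (W1 : Fin n → Fin d → ℝ) (b1 : Fin n → ℝ)
    (W2 : Fin m → Fin n → ℝ) (b2 : Fin m → ℝ) (e γ : Fin n → ℝ) (y : Fin d → ℝ)
    (h : ∀ k, max (sInner (W1 k) y + b1 k) 0 = e k * (sInner (W1 k) y + b1 k) + γ k)
    (p : Fin m) :
    oneLayer W1 b1 W2 b2 y p =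
      (∑ j, (∑ k, e k * (W2 p k * W1 k j)) * y j) +
        ((∑ k, W2 p k * (e k * b1 k + γ k)) + b2 p) := by
  unfold oneLayer
  have h1 : ∀ k, W2 p k * max (sInner (W1 k) y + b1 k) 0 =
      (∑ j, (e k * (W2 p k * W1 k j)) * y j) + W2 p k * (e k * b1 k + γ k) := by
    intro k
    rw [h k]
    unfold sInner
    have hS : ∑ j, (e k * (W2 p k * W1 k j)) * y j
        = e k * W2 p k * ∑ j, W1 k j * y j := by
      rw [Finset.mul_sum]; exact Finset.sum_congr rfl fun j _ => by ring
    rw [hS]; ring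
  calc (∑ k, W2 p k * max (sInner (W1 k) y + b1 k) 0) + b2 p
      = (∑ k, ((∑ j, (e k * (W2 p k * W1 k j)) * y j) + W2 p k * (e k * b1 k + γ k))) + b2 p := by
        rw [Finset.sum_congr rfl (fun k _ => h1 k)]
    _ = (∑ k, ∑ j, (e k * (W2 p k * W1 k j)) * y j) + ((∑ k, W2 p k * (e k * b1 k + γ k)) + b2 p) := by
        rw [Finset.sum_add_distrib]; ring
    _ = (∑ j, (∑ k, e k * (W2 p k * W1 k j)) * y j) + ((∑ k, W2 p k * (e k * b1 k + γ k)) + b2 p) := by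
        rw [Finset.sum_comm]
        congr 1
        refine Finset.sum_congr rfl fun j _ => ?_
        rw [Finset.sum_mul]

lemma not_breakpoint {d n m : ℕ} (V1 : Fin n → Fin d → ℝ) (c1 : Fin n → ℝ)
    (V2 : Fin m → Fin n → ℝ) (c2 : Fin m → ℝ) (x : Fin d → ℝ)
    (hx : ∀ k, V1 k ≠ 0 → sInner (V1 k) x + c1 k ≠ 0) :
    x ∉ Breakpoints (oneLayer V1 c1 V2 c2) := by
  classical
  intro hbp
  apply hbp
  set U : Set (Fin d → ℝ) :=
    ⋂ k, {y | V1 k ≠ 0 → 0 < (sInner (V1 k) x + c1 k) * (sInner (V1 k) y + c1 k)} with hU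
  have hUopen : IsOpen U := by
    apply isOpen_iInter_of_finite
    intro k
    by_cases hk : V1 k = 0
    · simp [hk]
    · have : {y : Fin d → ℝ | V1 k ≠ 0 → 0 < (sInner (V1 k) x + c1 k) * (sInner (V1 k) y + c1 k)}
          = {y | 0 < (sInner (V1 k) x + c1 k) * (sInner (V1 k) y + c1 k)} := by
        ext y; simp [hk]
      rw [this]
      exact isOpen_lt continuous_const (continuous_const.mul ((continuous_sInner (V1 k)).add continuous_const))
  have hxU : x ∈ U := by
    simp only [hU, Set.mem_iInter, Set.mem_setOf_eq]
    intro k hk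
    exact mul_self_pos.mpr (hx k hk)
  set e : Fin n → ℝ := fun k => if V1 k ≠ 0 ∧ 0 < sInner (V1 k) x + c1 k then 1 else 0 with he
  set γ : Fin n → ℝ := fun k => if V1 k = 0 then max (c1 k) 0 else 0 with hγ
  refine ⟨U, hUopen, hxU, fun p j => ∑ k, e k * (V2 p k * V1 k j),
    fun p => (∑ k, V2 p k * (e k * c1 k + γ k)) + c2 p, ?_⟩
  intro y hy p
  apply expand
  intro k
  by_cases hk : V1 k = 0
  · have h0 : sInner (V1 k) y = 0 := by simp [sInner, hk]
    have h0' : sInner (V1 k) y + c1 k = c1 k := by rw [h0]; ring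
    rw [h0', he, hγ]
    simp [hk]
  · have hyk := Set.mem_iInter.mp hy k
    simp only [Set.mem_setOf_eq] at hyk
    have hprod := hyk hk
    rcases lt_or_gt_of_ne (hx k hk) with hneg | hpos
    · have hyneg : sInner (V1 k) y + c1 k < 0 := by nlinarith
      rw [max_eq_right (le_of_lt hyneg), he, hγ]
      simp [hk, not_lt.mpr (le_of_lt hneg)]
    · have hypos : 0 < sInner (V1 k) y + c1 k := by nlinarith
      rw [max_eq_left (le_of_lt hypos), he, hγ]
      simp [hk, hpos]

lemma coeffs_eq_of_open {d m : ℕ} {U : Set (Fin d → ℝ)} (hU : IsOpen U)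
    (hne : U.Nonempty) (A A' : Fin m → Fin d → ℝ) (c c' : Fin m → ℝ)
    (h : ∀ y ∈ U, ∀ p, (∑ j, A p j * y j) + c p = (∑ j, A' p j * y j) + c' p)
    (p : Fin m) (j : Fin d) : A p j = A' p j := by
  classical
  obtain ⟨y0, hy0⟩ := hne
  obtain ⟨r, hr, hball⟩ := Metric.isOpen_iff.mp hU y0 hy0
  set y1 : Fin d → ℝ := y0 + (r/2) • (Pi.single j 1 : Fin d → ℝ) with hy1
  have hy1U : y1 ∈ U := by
    apply hball
    rw [Metric.mem_ball]
    rw [dist_pi_lt_iff hr]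
    intro l
    rw [hy1]
    simp only [Pi.add_apply, Pi.smul_apply, smul_eq_mul]
    rw [Real.dist_eq]
    have heq : y0 l + r / 2 * (Pi.single j 1 : Fin d → ℝ) l - y0 l
        = r / 2 * (Pi.single j 1 : Fin d → ℝ) l := by ring
    rw [heq, Pi.single_apply]
    by_cases hlj : l = j
    · rw [if_pos hlj, mul_one, abs_of_pos (by linarith)]; linarith
    · rw [if_neg hlj, mul_zero, abs_zero]; linarith
  have h0 := h y0 hy0 p
  have h1 := h y1 hy1U p
  have hsum : ∀ B : Fin d → ℝ, ∑ l, B l * y1 l = (∑ l, B l * y0 l) + (r/2) * B j := by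
    intro B
    rw [hy1]
    simp only [Pi.add_apply, Pi.smul_apply, smul_eq_mul]
    have : ∀ l, B l * (y0 l + r / 2 * (Pi.single j 1 : Fin d → ℝ) l)
        = B l * y0 l + (r/2) * (B l * (Pi.single j 1 : Fin d → ℝ) l) := by intro l; ring
    rw [Finset.sum_congr rfl fun l _ => this l, Finset.sum_add_distrib, ← Finset.mul_sum]
    congr 1
    congr 1
    have : ∀ l, B l * (Pi.single j 1 : Fin d → ℝ) l = if l = j then B l else 0 := by
      intro l; rw [Pi.single_apply]; by_cases hlj : l = j <;> simp [hlj]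
    rw [Finset.sum_congr rfl fun l _ => this l, Finset.sum_ite_eq' Finset.univ j B]
    simp
  rw [hsum (A p), hsum (A' p)] at h1
  have : (r/2) * A p j = (r/2) * A' p j := by linarith
  have hr2 : (r:ℝ)/2 ≠ 0 := by positivity
  exact mul_left_cancel₀ hr2 this

lemma isOpen_guard {d : ℕ} (w : Fin d → ℝ) (β co : ℝ) (q : Prop) [Decidable q] :
    IsOpen {z : Fin d → ℝ | q → 0 < co * (sInner w z + β)} := by
  by_cases hq : q
  · have h : {z : Fin d → ℝ | q → 0 < co * (sInner w z + β)}
        = {z | 0 < co * (sInner w z + β)} := by ext z; simp [hq]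
    rw [h]
    exact isOpen_lt continuous_const (continuous_const.mul ((continuous_sInner w).add continuous_const))
  · have h : {z : Fin d → ℝ | q → 0 < co * (sInner w z + β)} = Set.univ := by ext z; simp [hq]
    rw [h]; exact isOpen_univ

/-- If `f - g` has affine representation `(A, c)` on `P` and both `f`, `g`
have affine representations on an open nonempty `S ⊆ P`, then `A` is the
difference of the linear parts. -/
lemma A_eq_of_affine_reps {d m : ℕ} {P S : Set (Fin d → ℝ)} (hS : IsOpen S)
    (hne : S.Nonempty) (hSP : S ⊆ P)
    (f g : (Fin d → ℝ) → Fin m → ℝ) (A Gf Gg : Fin m → Fin d → ℝ)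
    (c Cf Cg : Fin m → ℝ)
    (hAc : ∀ x ∈ P, ∀ p, f x p - g x p = (∑ j, A p j * x j) + c p)
    (hf : ∀ y ∈ S, ∀ p, f y p = (∑ j, Gf p j * y j) + Cf p)
    (hg : ∀ y ∈ S, ∀ p, g y p = (∑ j, Gg p j * y j) + Cg p) :
    ∀ p j, A p j = Gf p j - Gg p j := by
  intro p j
  refine coeffs_eq_of_open hS hne A (fun p j => Gf p j - Gg p j) c
    (fun p => Cf p - Cg p) ?_ p j
  intro y hy q
  have h1 := hAc y (hSP hy) q
  rw [hf y hy q, hg y hy q] at h1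
  have h2 : ∑ l, (Gf q l - Gg q l) * y l
      = (∑ l, Gf q l * y l) - ∑ l, Gg q l * y l := by
    rw [← Finset.sum_sub_distrib]; exact Finset.sum_congr rfl fun l _ => by ring
  show (∑ l, A q l * y l) + c q = (∑ l, (Gf q l - Gg q l) * y l) + (Cf q - Cg q)
  rw [h2]
  linarith [h1]

/-- **Fixed-width affine difference (Lemma on shallow networks).**
Let `f` and `g` be one-hidden-layer networks with the same number `n` of hidden
neurons, whose breakpoints in the interior of a full-dimensional polytope `P`
are the same `n` pairwise distinct hyperplanes `H_i = {⟨W₁ᵢ,·⟩ + b₁ᵢ = 0}`, each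
meeting the interior of `P`.  If `f - g` is affine on `P`, then its linear part
is `∑ i, αᵢ W₂_{:,i} W₁ᵢ` with `αᵢ ∈ {-1, 0, 1}`. -/
theorem fixed_width_affine_difference (d m n : ℕ)
    (P : Set (Fin d → ℝ)) (hP : IsPolytope P) (hPint : (interior P).Nonempty)
    (W1 : Fin n → Fin d → ℝ) (b1 : Fin n → ℝ)
    (W2 : Fin m → Fin n → ℝ) (b2 : Fin m → ℝ)
    (V1 : Fin n → Fin d → ℝ) (c1 : Fin n → ℝ)
    (V2 : Fin m → Fin n → ℝ) (c2 : Fin m → ℝ)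
    (hW1 : ∀ i, W1 i ≠ 0)
    (hdist : ∀ i j : Fin n, i ≠ j → Hyp (W1 i) (b1 i) ≠ Hyp (W1 j) (b1 j))
    (hmeet : ∀ i, (Hyp (W1 i) (b1 i) ∩ interior P).Nonempty)
    (hbf : Breakpoints (oneLayer W1 b1 W2 b2) ∩ interior P =
      (⋃ i, Hyp (W1 i) (b1 i)) ∩ interior P)
    (hbg : Breakpoints (oneLayer V1 c1 V2 c2) ∩ interior P =
      (⋃ i, Hyp (W1 i) (b1 i)) ∩ interior P)
    (A : Fin m → Fin d → ℝ) (c : Fin m → ℝ)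
    (hAc : ∀ x ∈ P, ∀ p,
      oneLayer W1 b1 W2 b2 x p - oneLayer V1 c1 V2 c2 x p = (∑ j, A p j * x j) + c p) :
    ∃ α : Fin n → ℝ, (∀ i, α i = -1 ∨ α i = 0 ∨ α i = 1) ∧
      ∀ p j, A p j = ∑ i, α i * (W2 p i * W1 i j) := by
  classical
  have hBopen : IsOpen (interior P) := isOpen_interior
  have hBP : interior P ⊆ P := interior_subset
  set f := oneLayer W1 b1 W2 b2 with hf
  set g := oneLayer V1 c1 V2 c2 with hg
  -- every point of `H i ∩ interior P` is a breakpoint of `g`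
  have hHBp : ∀ i (y : Fin d → ℝ), sInner (W1 i) y + b1 i = 0 → y ∈ interior P →
      y ∈ Breakpoints g := by
    intro i y hy hyB
    have hmem : y ∈ (⋃ i, Hyp (W1 i) (b1 i)) ∩ interior P :=
      ⟨Set.mem_iUnion.mpr ⟨i, hy⟩, hyB⟩
    rw [← hbg] at hmem
    exact hmem.1
  -- Step 1: matching of hyperplanes of `g` with the `H i`
  have hmatch : ∀ i, ∃ k, ∃ l : ℝ, l ≠ 0 ∧ V1 k = l • W1 i ∧ c1 k = l * b1 i := by
    intro i
    by_contra hcon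
    push_neg at hcon
    obtain ⟨x0, hx0H, hx0B⟩ := hmeet i
    obtain ⟨ρ, hρ, hballρ⟩ := Metric.isOpen_iff.mp hBopen x0 hx0B
    have hk : ∀ k ∈ Finset.univ.filter (fun k => V1 k ≠ 0), ∃ z,
        (sInner (W1 i) z + b1 i = 0) ∧ sInner (V1 k) z + c1 k ≠ 0 := by
      intro k hkmem
      have hkne : V1 k ≠ 0 := (Finset.mem_filter.mp hkmem).2
      by_contra hz
      push_neg at hz
      obtain ⟨l, hl1, hl2⟩ := parallel_of_subset (hW1 i) hz
      have hl0 : l ≠ 0 := fun h0 => hkne (by rw [hl1, h0, zero_smul])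
      exact hcon k l hl0 hl1 hl2
    obtain ⟨y, hyH, hyd, hyt⟩ := avoid (W1 i) (b1 i) V1 c1
      (Finset.univ.filter fun k => V1 k ≠ 0) hk x0 hx0H ρ hρ
    have hyB : y ∈ interior P := hballρ (Metric.mem_ball.mpr hyd)
    refine not_breakpoint V1 c1 V2 c2 y ?_ (hHBp i y hyH hyB)
    intro k hkne
    exact hyt k (Finset.mem_filter.mpr ⟨Finset.mem_univ k, hkne⟩)
  choose τ lam hlam hV1 hc1 using hmatch
  have hτinj : Function.Injective τ := by
    intro i i' hii
    by_contra hne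
    apply hdist i i' hne
    have h1 : Hyp (W1 i) (b1 i) = Hyp (lam i • W1 i) (lam i * b1 i) :=
      (hyp_scale _ _ (hlam i)).symm
    have h2 : Hyp (W1 i') (b1 i') = Hyp (lam i' • W1 i') (lam i' * b1 i') :=
      (hyp_scale _ _ (hlam i')).symm
    rw [h1, h2, ← hV1 i, ← hV1 i', ← hc1 i, ← hc1 i', hii]
  have hτbij : Function.Bijective τ := Finite.injective_iff_bijective.mp hτinj
  set σ : Fin n → ℝ := fun i => if 0 < lam i then 1 else -1 with hσ
  have hσ2 : ∀ i, σ i * σ i = 1 := by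
    intro i; by_cases h : 0 < lam i <;> simp [hσ, h]
  -- preactivation of the matched neuron
  have hsg : ∀ i (y : Fin d → ℝ), sInner (V1 (τ i)) y + c1 (τ i)
      = lam i * (sInner (W1 i) y + b1 i) := by
    intro i y
    rw [hV1 i, sInner_smul_left, hc1 i]; ring
  -- Step 2: the jump identity across each hyperplane
  have key : ∀ i p, lam i * V2 p (τ i) = σ i * W2 p i := by
    intro i
    obtain ⟨x0, hx0H, hx0B⟩ := hmeet i
    obtain ⟨ρ, hρ, hballρ⟩ := Metric.isOpen_iff.mp hBopen x0 hx0B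
    have hk : ∀ j ∈ Finset.univ.erase i, ∃ z,
        (sInner (W1 i) z + b1 i = 0) ∧ sInner (W1 j) z + b1 j ≠ 0 := by
      intro j hj
      have hji : j ≠ i := Finset.ne_of_mem_erase hj
      by_contra hz
      push_neg at hz
      obtain ⟨l, hl1, hl2⟩ := parallel_of_subset (hW1 i) hz
      have hl0 : l ≠ 0 := fun h0 => hW1 j (by rw [hl1, h0, zero_smul])
      exact hdist j i hji (by rw [hl1, hl2, hyp_scale _ _ hl0])
    obtain ⟨xi, hxiH, hxid, hxit⟩ := avoid (W1 i) (b1 i) W1 b1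
      (Finset.univ.erase i) hk x0 hx0H ρ hρ
    have hxiB : xi ∈ interior P := hballρ (Metric.mem_ball.mpr hxid)
    have hxit' : ∀ j, j ≠ i → sInner (W1 j) xi + b1 j ≠ 0 := fun j hj =>
      hxit j (Finset.mem_erase.mpr ⟨hj, Finset.mem_univ j⟩)
    -- sign-stable neighborhood of xi
    set U : Set (Fin d → ℝ) := interior P ∩
      ⋂ j, {z | j ≠ i → 0 < (sInner (W1 j) xi + b1 j) * (sInner (W1 j) z + b1 j)}
      with hUdef
    have hUopen : IsOpen U := by
      refine hBopen.inter (isOpen_iInter_of_finite fun j => ?_)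
      exact isOpen_guard (W1 j) (b1 j) (sInner (W1 j) xi + b1 j) (j ≠ i)
    have hxiU : xi ∈ U := by
      refine ⟨hxiB, Set.mem_iInter.mpr fun j => fun hj => ?_⟩
      exact mul_self_pos.mpr (hxit' j hj)
    have hUsign : ∀ z ∈ U, ∀ j, j ≠ i →
        0 < (sInner (W1 j) xi + b1 j) * (sInner (W1 j) z + b1 j) := by
      intro z hz j hj
      exact (Set.mem_iInter.mp hz.2 j) hj
    set Up := U ∩ {z | 0 < sInner (W1 i) z + b1 i} with hUpdef
    set Um := U ∩ {z | sInner (W1 i) z + b1 i < 0} with hUmdef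
    have hUpopen : IsOpen Up := hUopen.inter
      (isOpen_lt continuous_const ((continuous_sInner _).add continuous_const))
    have hUmopen : IsOpen Um := hUopen.inter
      (isOpen_lt ((continuous_sInner _).add continuous_const) continuous_const)
    set v : Fin d → ℝ := (1 / sInner (W1 i) (W1 i)) • W1 i with hvdef
    have hS0 : sInner (W1 i) (W1 i) ≠ 0 := ne_of_gt (sInner_self_pos (hW1 i))
    have hvt : ∀ s : ℝ, sInner (W1 i) (xi + s • v) + b1 i = s := by
      intro s
      rw [sInner_add_right, hvdef, sInner_smul_right, sInner_smul_right]
      have h0 : sInner (W1 i) xi + b1 i = 0 := hxiH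
      have h1 : (1 / sInner (W1 i) (W1 i)) * sInner (W1 i) (W1 i) = 1 := by
        field_simp
      rw [h1]
      linarith [h0]
    have htend : Filter.Tendsto (fun s : ℝ => xi + s • v) (𝓝 0) (𝓝 xi) := by
      have hcont : Continuous (fun s : ℝ => xi + s • v) :=
        continuous_const.add (continuous_id.smul continuous_const)
      have h := hcont.tendsto 0
      simpa using h
    have hUpne : Up.Nonempty := by
      have h1 : ∀ᶠ s in 𝓝[>] (0:ℝ), xi + s • v ∈ U :=
        (htend.mono_left nhdsWithin_le_nhds).eventually (hUopen.mem_nhds hxiU)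
      have h2 : ∀ᶠ s in 𝓝[>] (0:ℝ), 0 < s := eventually_mem_nhdsWithin
      obtain ⟨s, hs1, hs2⟩ := (h1.and h2).exists
      exact ⟨xi + s • v, hs1, by rw [Set.mem_setOf_eq, hvt]; exact hs2⟩
    have hUmne : Um.Nonempty := by
      have h1 : ∀ᶠ s in 𝓝[<] (0:ℝ), xi + s • v ∈ U :=
        (htend.mono_left nhdsWithin_le_nhds).eventually (hUopen.mem_nhds hxiU)
      have h2 : ∀ᶠ s in 𝓝[<] (0:ℝ), s < 0 := eventually_mem_nhdsWithin
      obtain ⟨s, hs1, hs2⟩ := (h1.and h2).exists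
      exact ⟨xi + s • v, hs1, by rw [Set.mem_setOf_eq, hvt]; exact hs2⟩
    -- activation patterns
    set ef : Fin n → ℝ := fun l => if l = i then 1
      else if 0 < sInner (W1 l) xi + b1 l then 1 else 0 with hefdef
    set em : Fin n → ℝ := fun l => if l = i then 0
      else if 0 < sInner (W1 l) xi + b1 l then 1 else 0 with hemdef
    set dp : Fin n → ℝ := fun k => if k = τ i then (if 0 < lam i then 1 else 0)
      else if 0 < sInner (V1 k) xi + c1 k then 1 else 0 with hdpdef
    set dm : Fin n → ℝ := fun k => if k = τ i then (if 0 < lam i then 0 else 1)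
      else if 0 < sInner (V1 k) xi + c1 k then 1 else 0 with hdmdef
    -- sign facts for g-neurons other than τ i
    have hgsign : ∀ k, k ≠ τ i → ∀ z ∈ U,
        0 < (sInner (V1 k) xi + c1 k) * (sInner (V1 k) z + c1 k) := by
      intro k hkne z hz
      obtain ⟨i', hi'⟩ := hτbij.2 k
      have hi'i : i' ≠ i := by rintro rfl; exact hkne hi'.symm
      have h1 := hUsign z hz i' hi'i
      have h2 : sInner (V1 k) xi + c1 k = lam i' * (sInner (W1 i') xi + b1 i') := by
        rw [← hi']; exact hsg i' xi
      have h3 : sInner (V1 k) z + c1 k = lam i' * (sInner (W1 i') z + b1 i') := by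
        rw [← hi']; exact hsg i' z
      rw [h2, h3]
      have hl := hlam i'
      nlinarith [mul_pos (mul_self_pos.mpr hl) h1]
    -- max identities for f on Up
    have hfUp : ∀ y ∈ Up, ∀ l, max (sInner (W1 l) y + b1 l) 0
        = ef l * (sInner (W1 l) y + b1 l) + 0 := by
      intro y hy l
      by_cases hl : l = i
      · subst hl
        have hpos : 0 < sInner (W1 l) y + b1 l := hy.2
        rw [max_eq_left (le_of_lt hpos), hefdef]
        simp
      · have h1 := hUsign y hy.1 l hl
        have h2 := hxit' l hl
        rcases lt_or_gt_of_ne h2 with hneg | hpos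
        · have : sInner (W1 l) y + b1 l < 0 := by nlinarith
          rw [max_eq_right (le_of_lt this), hefdef]
          simp [hl, not_lt.mpr (le_of_lt hneg)]
        · have : 0 < sInner (W1 l) y + b1 l := by nlinarith
          rw [max_eq_left (le_of_lt this), hefdef]
          simp [hl, hpos]
    have hfUm : ∀ y ∈ Um, ∀ l, max (sInner (W1 l) y + b1 l) 0
        = em l * (sInner (W1 l) y + b1 l) + 0 := by
      intro y hy l
      by_cases hl : l = i
      · subst hl
        have hneg : sInner (W1 l) y + b1 l < 0 := hy.2
        rw [max_eq_right (le_of_lt hneg), hemdef]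
        simp
      · have h1 := hUsign y hy.1 l hl
        have h2 := hxit' l hl
        rcases lt_or_gt_of_ne h2 with hneg | hpos
        · have : sInner (W1 l) y + b1 l < 0 := by nlinarith
          rw [max_eq_right (le_of_lt this), hemdef]
          simp [hl, not_lt.mpr (le_of_lt hneg)]
        · have : 0 < sInner (W1 l) y + b1 l := by nlinarith
          rw [max_eq_left (le_of_lt this), hemdef]
          simp [hl, hpos]
    -- max identities for g on Up, Um
    have hgUp : ∀ y ∈ Up, ∀ k, max (sInner (V1 k) y + c1 k) 0
        = dp k * (sInner (V1 k) y + c1 k) + 0 := by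
      intro y hy k
      by_cases hk : k = τ i
      · subst hk
        have hti : 0 < sInner (W1 i) y + b1 i := hy.2
        have hsk := hsg i y
        by_cases hli : 0 < lam i
        · have : 0 < sInner (V1 (τ i)) y + c1 (τ i) := by rw [hsk]; positivity
          rw [max_eq_left (le_of_lt this), hdpdef]
          simp [hli]
        · have hlneg : lam i < 0 := lt_of_le_of_ne (not_lt.mp hli) (hlam i)
          have : sInner (V1 (τ i)) y + c1 (τ i) < 0 := by
            rw [hsk]; exact mul_neg_of_neg_of_pos hlneg hti
          rw [max_eq_right (le_of_lt this), hdpdef]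
          simp [hli]
      · have h1 := hgsign k hk y hy.1
        have h2 : sInner (V1 k) xi + c1 k ≠ 0 := by
          intro h0; rw [h0] at h1; simp at h1
        rcases lt_or_gt_of_ne h2 with hneg | hpos
        · have : sInner (V1 k) y + c1 k < 0 := by nlinarith
          rw [max_eq_right (le_of_lt this), hdpdef]
          simp [hk, not_lt.mpr (le_of_lt hneg)]
        · have : 0 < sInner (V1 k) y + c1 k := by nlinarith
          rw [max_eq_left (le_of_lt this), hdpdef]
          simp [hk, hpos]
    have hgUm : ∀ y ∈ Um, ∀ k, max (sInner (V1 k) y + c1 k) 0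
        = dm k * (sInner (V1 k) y + c1 k) + 0 := by
      intro y hy k
      by_cases hk : k = τ i
      · subst hk
        have hti : sInner (W1 i) y + b1 i < 0 := hy.2
        have hsk := hsg i y
        by_cases hli : 0 < lam i
        · have : sInner (V1 (τ i)) y + c1 (τ i) < 0 := by
            rw [hsk]; exact mul_neg_of_pos_of_neg hli hti
          rw [max_eq_right (le_of_lt this), hdmdef]
          simp [hli]
        · have hlneg : lam i < 0 := lt_of_le_of_ne (not_lt.mp hli) (hlam i)
          have : 0 < sInner (V1 (τ i)) y + c1 (τ i) := by
            rw [hsk]; exact mul_pos_of_neg_of_neg hlneg hti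
          rw [max_eq_left (le_of_lt this), hdmdef]
          simp [hli]
      · have h1 := hgsign k hk y hy.1
        have h2 : sInner (V1 k) xi + c1 k ≠ 0 := by
          intro h0; rw [h0] at h1; simp at h1
        rcases lt_or_gt_of_ne h2 with hneg | hpos
        · have : sInner (V1 k) y + c1 k < 0 := by nlinarith
          rw [max_eq_right (le_of_lt this), hdmdef]
          simp [hk, not_lt.mpr (le_of_lt hneg)]
        · have : 0 < sInner (V1 k) y + c1 k := by nlinarith
          rw [max_eq_left (le_of_lt this), hdmdef]
          simp [hk, hpos]
    -- affine representations and coefficient identities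
    have hApl : ∀ p j, A p j = (∑ l, ef l * (W2 p l * W1 l j))
        - (∑ k, dp k * (V2 p k * V1 k j)) := by
      refine A_eq_of_affine_reps hUpopen hUpne (fun z hz => hBP hz.1.1) f g A
        (fun p j => ∑ l, ef l * (W2 p l * W1 l j))
        (fun p j => ∑ k, dp k * (V2 p k * V1 k j)) c
        (fun p => (∑ l, W2 p l * (ef l * b1 l + 0)) + b2 p)
        (fun p => (∑ k, V2 p k * (dp k * c1 k + 0)) + c2 p) hAc ?_ ?_
      · intro y hy p
        exact expand W1 b1 W2 b2 ef (fun _ => 0) y (fun l => hfUp y hy l) p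
      · intro y hy p
        exact expand V1 c1 V2 c2 dp (fun _ => 0) y (fun k => hgUp y hy k) p
    have hAmi : ∀ p j, A p j = (∑ l, em l * (W2 p l * W1 l j))
        - (∑ k, dm k * (V2 p k * V1 k j)) := by
      refine A_eq_of_affine_reps hUmopen hUmne (fun z hz => hBP hz.1.1) f g A
        (fun p j => ∑ l, em l * (W2 p l * W1 l j))
        (fun p j => ∑ k, dm k * (V2 p k * V1 k j)) c
        (fun p => (∑ l, W2 p l * (em l * b1 l + 0)) + b2 p)
        (fun p => (∑ k, V2 p k * (dm k * c1 k + 0)) + c2 p) hAc ?_ ?_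
      · intro y hy p
        exact expand W1 b1 W2 b2 em (fun _ => 0) y (fun l => hfUm y hy l) p
      · intro y hy p
        exact expand V1 c1 V2 c2 dm (fun _ => 0) y (fun k => hgUm y hy k) p
    -- the jump identity
    have hjump : ∀ p j, W2 p i * W1 i j = σ i * (V2 p (τ i) * V1 (τ i) j) := by
      intro p j
      have h1 := hApl p j
      have h2 := hAmi p j
      have h3 : (∑ l, ef l * (W2 p l * W1 l j)) - (∑ l, em l * (W2 p l * W1 l j))
          = (∑ k, dp k * (V2 p k * V1 k j)) - (∑ k, dm k * (V2 p k * V1 k j)) := by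
        linarith
      have h4 : (∑ l, ef l * (W2 p l * W1 l j)) - (∑ l, em l * (W2 p l * W1 l j))
          = W2 p i * W1 i j := by
        rw [← Finset.sum_sub_distrib]
        rw [Finset.sum_eq_single i]
        · rw [hefdef, hemdef]; simp
        · intro l _ hl
          rw [hefdef, hemdef]; simp [hl]
        · intro h; exact absurd (Finset.mem_univ i) h
      have h5 : (∑ k, dp k * (V2 p k * V1 k j)) - (∑ k, dm k * (V2 p k * V1 k j))
          = σ i * (V2 p (τ i) * V1 (τ i) j) := by
        rw [← Finset.sum_sub_distrib]
        rw [Finset.sum_eq_single (τ i)]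
        · rw [hdpdef, hdmdef, hσ]
          by_cases hli : 0 < lam i <;> simp [hli] <;> ring
        · intro k _ hk
          rw [hdpdef, hdmdef]; simp [hk]
        · intro h; exact absurd (Finset.mem_univ (τ i)) h
      rw [← h4, h3, h5]
    intro p
    obtain ⟨j0, hj0⟩ := Function.ne_iff.mp (hW1 i)
    have hj0' : W1 i j0 ≠ 0 := by simpa using hj0
    have h6 := hjump p j0
    have h7 : V1 (τ i) j0 = lam i * W1 i j0 := by
      rw [hV1 i]; simp
    rw [h7] at h6
    have h8 : (lam i * V2 p (τ i)) * W1 i j0 = (σ i * W2 p i) * W1 i j0 := by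
      have hσ2i := hσ2 i
      linear_combination (-(σ i)) * h6 + (-(lam i * V2 p (τ i) * W1 i j0)) * hσ2i
    exact mul_right_cancel₀ hj0' h8
  -- Step 3: evaluate A at a generic point
  obtain ⟨x0, hx0B⟩ := hPint
  obtain ⟨ρ, hρ, hballρ⟩ := Metric.isOpen_iff.mp hBopen x0 hx0B
  have hzero : sInner (0 : Fin d → ℝ) x0 + 0 = 0 := by simp [sInner]
  have hkgen : ∀ j ∈ (Finset.univ : Finset (Fin n)), ∃ z,
      (sInner (0 : Fin d → ℝ) z + 0 = 0) ∧ sInner (W1 j) z + b1 j ≠ 0 := by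
    intro j _
    have hSj : sInner (W1 j) (W1 j) ≠ 0 := ne_of_gt (sInner_self_pos (hW1 j))
    refine ⟨((1 - b1 j) / sInner (W1 j) (W1 j)) • W1 j, by simp [sInner], ?_⟩
    rw [sInner_smul_right]
    field_simp; simp
  obtain ⟨y, _, hyd, hyt'⟩ := avoid (0 : Fin d → ℝ) 0 W1 b1 Finset.univ hkgen x0 hzero ρ hρ
  have hyB : y ∈ interior P := hballρ (Metric.mem_ball.mpr hyd)
  have hyt : ∀ j, sInner (W1 j) y + b1 j ≠ 0 := fun j => hyt' j (Finset.mem_univ j)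
  -- sign-stable neighborhood of y
  set U : Set (Fin d → ℝ) := interior P ∩
    ⋂ j, {z | True → 0 < (sInner (W1 j) y + b1 j) * (sInner (W1 j) z + b1 j)}
    with hUdef
  have hUopen : IsOpen U := by
    refine hBopen.inter (isOpen_iInter_of_finite fun j => ?_)
    exact isOpen_guard (W1 j) (b1 j) (sInner (W1 j) y + b1 j) True
  have hyU : y ∈ U := by
    refine ⟨hyB, Set.mem_iInter.mpr fun j => fun _ => ?_⟩
    exact mul_self_pos.mpr (hyt j)
  have hUne : U.Nonempty := ⟨y, hyU⟩
  have hUsign : ∀ z ∈ U, ∀ j,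
      0 < (sInner (W1 j) y + b1 j) * (sInner (W1 j) z + b1 j) := by
    intro z hz j
    exact (Set.mem_iInter.mp hz.2 j) trivial
  set e : Fin n → ℝ := fun l => if 0 < sInner (W1 l) y + b1 l then 1 else 0 with hedef
  set dg : Fin n → ℝ := fun k => if 0 < sInner (V1 k) y + c1 k then 1 else 0 with hdgdef
  have hfU : ∀ z ∈ U, ∀ l, max (sInner (W1 l) z + b1 l) 0
      = e l * (sInner (W1 l) z + b1 l) + 0 := by
    intro z hz l
    have h1 := hUsign z hz l
    rcases lt_or_gt_of_ne (hyt l) with hneg | hpos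
    · have : sInner (W1 l) z + b1 l < 0 := by nlinarith
      rw [max_eq_right (le_of_lt this), hedef]
      simp [not_lt.mpr (le_of_lt hneg)]
    · have : 0 < sInner (W1 l) z + b1 l := by nlinarith
      rw [max_eq_left (le_of_lt this), hedef]
      simp [hpos]
  have hsyne : ∀ k, sInner (V1 k) y + c1 k ≠ 0 := by
    intro k
    obtain ⟨i', hi'⟩ := hτbij.2 k
    rw [← hi', hsg i' y]
    exact mul_ne_zero (hlam i') (hyt i')
  have hgsignU : ∀ z ∈ U, ∀ k,
      0 < (sInner (V1 k) y + c1 k) * (sInner (V1 k) z + c1 k) := by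
    intro z hz k
    obtain ⟨i', hi'⟩ := hτbij.2 k
    have h1 := hUsign z hz i'
    rw [← hi', hsg i' y, hsg i' z]
    have hl := hlam i'
    nlinarith [mul_pos (mul_self_pos.mpr hl) h1]
  have hgU : ∀ z ∈ U, ∀ k, max (sInner (V1 k) z + c1 k) 0
      = dg k * (sInner (V1 k) z + c1 k) + 0 := by
    intro z hz k
    have h1 := hgsignU z hz k
    rcases lt_or_gt_of_ne (hsyne k) with hneg | hpos
    · have : sInner (V1 k) z + c1 k < 0 := by nlinarith
      rw [max_eq_right (le_of_lt this), hdgdef]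
      simp [not_lt.mpr (le_of_lt hneg)]
    · have : 0 < sInner (V1 k) z + c1 k := by nlinarith
      rw [max_eq_left (le_of_lt this), hdgdef]
      simp [hpos]
  have hAval : ∀ p j, A p j = (∑ l, e l * (W2 p l * W1 l j))
      - (∑ k, dg k * (V2 p k * V1 k j)) := by
    refine A_eq_of_affine_reps hUopen hUne (fun z hz => hBP hz.1) f g A
      (fun p j => ∑ l, e l * (W2 p l * W1 l j))
      (fun p j => ∑ k, dg k * (V2 p k * V1 k j)) c
      (fun p => (∑ l, W2 p l * (e l * b1 l + 0)) + b2 p)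
      (fun p => (∑ k, V2 p k * (dg k * c1 k + 0)) + c2 p) hAc ?_ ?_
    · intro z hz p
      exact expand W1 b1 W2 b2 e (fun _ => 0) z (fun l => hfU z hz l) p
    · intro z hz p
      exact expand V1 c1 V2 c2 dg (fun _ => 0) z (fun k => hgU z hz k) p
  -- final answer
  refine ⟨fun i => e i - dg (τ i) * σ i, ?_, ?_⟩
  · intro i
    have hti := hyt i
    have hsi : sInner (V1 (τ i)) y + c1 (τ i) = lam i * (sInner (W1 i) y + b1 i) :=
      hsg i y
    rcases lt_or_gt_of_ne hti with htneg | htpos <;>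
      rcases lt_or_gt_of_ne (hlam i) with hlneg | hlpos
    · have hp : 0 < sInner (V1 (τ i)) y + c1 (τ i) := by
        rw [hsi]; exact mul_pos_of_neg_of_neg hlneg htneg
      right; right
      rw [hedef, hdgdef, hσ]
      simp [not_lt.mpr (le_of_lt htneg), hp, not_lt.mpr (le_of_lt hlneg)]
    · have hp : sInner (V1 (τ i)) y + c1 (τ i) < 0 := by
        rw [hsi]; exact mul_neg_of_pos_of_neg hlpos htneg
      right; left
      rw [hedef, hdgdef, hσ]
      simp [not_lt.mpr (le_of_lt htneg), not_lt.mpr (le_of_lt hp), hlpos]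
    · have hp : sInner (V1 (τ i)) y + c1 (τ i) < 0 := by
        rw [hsi]; exact mul_neg_of_neg_of_pos hlneg htpos
      right; right
      rw [hedef, hdgdef, hσ]
      simp [htpos, not_lt.mpr (le_of_lt hp), not_lt.mpr (le_of_lt hlneg)]
    · have hp : 0 < sInner (V1 (τ i)) y + c1 (τ i) := by
        rw [hsi]; exact mul_pos hlpos htpos
      right; left
      rw [hedef, hdgdef, hσ]
      simp [htpos, hp, hlpos]
  · intro p j
    rw [hAval p j]
    have hre : (∑ k, dg k * (V2 p k * V1 k j))
        = ∑ i, dg (τ i) * (V2 p (τ i) * V1 (τ i) j) :=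
      (Fintype.sum_bijective τ hτbij _ _ (fun i => rfl)).symm
    rw [hre, ← Finset.sum_sub_distrib]
    refine Finset.sum_congr rfl fun i _ => ?_
    have h7 : V1 (τ i) j = lam i * W1 i j := by
      rw [hV1 i]; simp
    rw [h7]
    have h2 := key i p
    linear_combination (-(dg (τ i)) * W1 i j) * h2


end ReLUNet
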